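/- The strong belief operator is not monotonic: there exist a two-player finite dynamic game, a player i, and events E, F over opponent strategy-type pairs with E ⊆ F such that the strong belief event SB_i(E) is not a subset of SB_i(F). -/

import Mathlib

open scoped ENNReal

/-- A (two-player) finite dynamic game together with an epistemic type
structure: for each player `i`, a finite strategy set `S i`, a finite set of
information sets `H i`, a type space `T i`, a reachability correspondence
`reach i j h = S_j(h)` (the strategies of player `j` allowing `h ∈ H_i` to
be reached), and a belief map `g` assigning to each type of `i` and each
information set of `i` a probability measure (a `PMF`) over profiles of
opponents' strategy-type pairs (the conditionals of a CPS). -/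
structure TwoPlayerTS where
  S : Fin 2 → Type
  [fS : ∀ i, Fintype (S i)]
  T : Fin 2 → Type
  H : Fin 2 → Type
  [fH : ∀ i, Fintype (H i)]
  reach : ∀ i j : Fin 2, H i → Set (S j)
  g : ∀ i : Fin 2, T i → H i → PMF (∀ j : Fin 2, S j × T j)

attribute [instance] TwoPlayerTS.fS TwoPlayerTS.fH

namespace TwoPlayerTS

variable (G : TwoPlayerTS)

/-- The belief event `B_{i,h}(E)`: the set of strategy-type pairs of player
`i` whose type, at information set `h`, assigns probability one to the event
`E ⊆ Ω_j = S_j × T_j` about opponent `j` (probability one of a `PMF` on a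
set means the support is contained in it). -/
def Bev (i j : Fin 2) (h : G.H i) (E : Set (G.S j × G.T j)) :
    Set (G.S i × G.T i) :=
  { p | ∀ ω ∈ (G.g i p.2 h).support, ω j ∈ E }

/-- The strong belief event `SB_i(E)`: player `i` believes `E` at every
information set `h ∈ H_i` at which `E` is not contradicted, i.e. such that
`Proj_{S_j} E ∩ S_j(h) ≠ ∅`. -/
def SBev (i j : Fin 2) (E : Set (G.S j × G.T j)) : Set (G.S i × G.T i) :=
  ⋂ h ∈ { h : G.H i | (Prod.fst '' E ∩ G.reach i j h).Nonempty },
    G.Bev i j h E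

end TwoPlayerTS


/-- Auxiliary counterexample structure. -/
noncomputable def Gex : TwoPlayerTS where
  S := fun _ => Fin 3
  T := fun _ => Unit
  H := fun _ => Bool
  reach := fun _ _ h => if h then {0} else {1}
  g := fun _ _ h => PMF.pure (fun _ => (if h then (0 : Fin 3) else 2, ()))

/-- The strong belief operator is not monotonic: there exist a
two-player finite dynamic game (with a type structure), a player `i` (with
opponent `j`), and events `E ⊆ F` over the opponent's strategy-type pairs
such that `SB_i(E)` is not a subset of `SB_i(F)`. -/
theorem strong_belief_not_monotone :
    ∃ (G : TwoPlayerTS) (i j : Fin 2) (_ : j ≠ i)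
      (E F : Set (G.S j × G.T j)),
      E ⊆ F ∧ ¬ G.SBev i j E ⊆ G.SBev i j F := by
  classical
  refine ⟨Gex, 0, 1, by decide, {((0 : Fin 3), ())}, {((0 : Fin 3), ()), ((1 : Fin 3), ())},
      ?_, ?_⟩
  · intro p hp; exact Or.inl hp
  · intro hsub
    have hmem : ((0 : Fin 3), ()) ∈ Gex.SBev 0 1 {((0 : Fin 3), ())} := by
      rw [TwoPlayerTS.SBev]; refine Set.mem_iInter₂.mpr ?_
      intro h hh ω hω
      simp only [Gex, PMF.support_pure, Set.mem_singleton_iff] at hω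
      subst hω
      cases h with
      | true => exact Set.mem_singleton_iff.mpr (by simp; rfl)
      | false =>
        exfalso
        obtain ⟨s, ⟨⟨a, ha, rfl⟩, hs2⟩⟩ := hh
        subst ha
        simp [Gex] at hs2
        change (0 : Fin 3) = 1 at hs2
        exact absurd hs2 (by decide)
    have hmem2 := hsub hmem
    have h2 : ((false : Bool) : Gex.H 0) ∈ { h : Gex.H 0 |
        (Prod.fst '' ({((0 : Fin 3), ()), ((1 : Fin 3), ())} : Set (Gex.S 1 × Gex.T 1))
          ∩ Gex.reach 0 1 h).Nonempty } := by
      refine ⟨(1 : Fin 3), ⟨((1 : Fin 3), ()), Or.inr rfl, rfl⟩, ?_⟩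
      simp [Gex]; exact rfl
    have h4 := Set.mem_iInter₂.mp hmem2 false h2
    have h5 := h4 (fun _ => ((2 : Fin 3), ())) (by simp [Gex]; exact rfl)
    change ((2 : Fin 3), ()) = ((0 : Fin 3), ()) ∨ ((2 : Fin 3), ()) = ((1 : Fin 3), ()) at h5
    simp only [Set.mem_insert_iff, Set.mem_singleton_iff, Prod.mk.injEq] at h5
    rcases h5 with ⟨h5, -⟩ | ⟨h5, -⟩ <;> exact absurd (congrArg Fin.val h5) (by decide)
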